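/- Fix integers k, ℓ with 1 < k < ℓ − 2, where k and ℓ divide n. Every planar graph containing C_{n,1}, C_{n,k}, and C_{n,ℓ} as subgraphs has at least (3/2 − 1/k − k/ℓ)·n − (k−1)(ℓ−k) − ℓ/2 vertices. -/
import Mathlib

open SimpleGraph

def HasMinor {V W : Type*} (G : SimpleGraph V) (H : SimpleGraph W) : Prop :=
  ∃ f : W → Set V,
    (∀ w, (f w).Nonempty) ∧
    (∀ w, (G.induce (f w)).Connected) ∧
    (Pairwise fun w₁ w₂ => Disjoint (f w₁) (f w₂)) ∧
    ∀ ⦃w₁ w₂⦄, H.Adj w₁ w₂ → ∃ a ∈ f w₁, ∃ b ∈ f w₂, G.Adj a b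

def IsPlanar {V : Type*} (G : SimpleGraph V) : Prop :=
  ¬ HasMinor G (completeGraph (Fin 5)) ∧
  ¬ HasMinor G (completeBipartiteGraph (Fin 3) (Fin 3))

def IsOuterplanar {V : Type*} (G : SimpleGraph V) : Prop :=
  ¬ HasMinor G (completeGraph (Fin 4)) ∧
  ¬ HasMinor G (completeBipartiteGraph (Fin 2) (Fin 3))

def Contains {V W : Type*} (G : SimpleGraph V) (H : SimpleGraph W) : Prop :=
  ∃ f : W ↪ V, ∀ ⦃a b⦄, H.Adj a b → G.Adj (f a) (f b)

/-- The caterpillar with spine a path on `k` vertices, each spine vertex having `m` leaves. -/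
def caterpillar (k m : ℕ) : SimpleGraph (Fin k ⊕ Fin k × Fin m) :=
  SimpleGraph.fromRel (fun a b =>
    match a, b with
    | Sum.inl i, Sum.inl j => (i : ℕ) + 1 = (j : ℕ)
    | Sum.inl i, Sum.inr p => i = p.1
    | _, _ => False)

lemma conn_single {V : Type*} (G : SimpleGraph V) (a : V) :
    (G.induce ({a} : Set V)).Connected := by
  haveI : Unique ({a} : Set V) := Set.uniqueSingleton a
  constructor
  intro u v
  rw [Subsingleton.elim u v]

/-- In a graph with no `K_{3,3}` minor, three distinct vertices have at most two
common neighbours. -/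
lemma no3common {V : Type} [Fintype V] [DecidableEq V] (G : SimpleGraph V) [DecidableRel G.Adj]
    (hG : ¬ HasMinor G (completeBipartiteGraph (Fin 3) (Fin 3)))
    {x y z : V} (hxy : x ≠ y) (hxz : x ≠ z) (hyz : y ≠ z) :
    (Finset.univ.filter (fun u => G.Adj x u ∧ G.Adj y u ∧ G.Adj z u)).card ≤ 2 := by
  by_contra hcard
  push_neg at hcard
  obtain ⟨t, ht, htc⟩ := Finset.exists_subset_card_eq hcard
  obtain ⟨u, v, w, huv, huw, hvw, rfl⟩ := Finset.card_eq_three.mp htc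
  have hu := ht (by simp : u ∈ ({u,v,w} : Finset V))
  have hv := ht (by simp : v ∈ ({u,v,w} : Finset V))
  have hw := ht (by simp : w ∈ ({u,v,w} : Finset V))
  simp only [Finset.mem_filter] at hu hv hw
  apply hG
  have hadjall : ∀ i j : Fin 3, G.Adj (![x,y,z] i) (![u,v,w] j) := by
    intro i j
    fin_cases i <;> fin_cases j <;>
      simp only [Matrix.cons_val_zero, Matrix.cons_val_one, Matrix.head_cons,
        Matrix.cons_val_two, Matrix.tail_cons]
    exacts [hu.2.1, hv.2.1, hw.2.1, hu.2.2.1, hv.2.2.1, hw.2.2.1,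
      hu.2.2.2, hv.2.2.2, hw.2.2.2]
  refine ⟨fun s => Sum.elim (fun i => {![x,y,z] i}) (fun j => {![u,v,w] j}) s,
    ?_, ?_, ?_, ?_⟩
  · rintro (i | j) <;> exact ⟨_, rfl⟩
  · rintro (i | j) <;> exact conn_single G _
  · rintro (i | j) (i' | j') hne <;>
      simp only [Sum.elim_inl, Sum.elim_inr, Set.disjoint_singleton]
    · have hii : i ≠ i' := fun h => hne (by rw [h])
      fin_cases i <;> fin_cases i' <;>
        simp only [Matrix.cons_val_zero, Matrix.cons_val_one, Matrix.head_cons,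
          Matrix.cons_val_two, Matrix.tail_cons] <;>
        first
          | exact absurd rfl hii
          | exact hxy | exact hxz | exact hyz
          | exact hxy.symm | exact hxz.symm | exact hyz.symm
    · exact (hadjall i j').ne
    · exact fun h => (hadjall i' j).ne h.symm
    · have hjj : j ≠ j' := fun h => hne (by rw [h])
      fin_cases j <;> fin_cases j' <;>
        simp only [Matrix.cons_val_zero, Matrix.cons_val_one, Matrix.head_cons,
          Matrix.cons_val_two, Matrix.tail_cons] <;>
        first
          | exact absurd rfl hjj
          | exact huv | exact huw | exact hvw
          | exact huv.symm | exact huw.symm | exact hvw.symm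
  · rintro (i | j) (i' | j') hadj
    · simp at hadj
    · exact ⟨_, rfl, _, rfl, hadjall i j'⟩
    · exact ⟨_, rfl, _, rfl, (hadjall i' j).symm⟩
    · simp at hadj

/-- Each spine vertex of an embedded caterpillar has degree at least the number of
its leaves. -/
lemma spine_deg {V : Type} [Fintype V] [DecidableEq V] {G : SimpleGraph V} [DecidableRel G.Adj]
    {m r : ℕ} (f : (Fin m ⊕ Fin m × Fin r) ↪ V)
    (hf : ∀ ⦃a b⦄, (caterpillar m r).Adj a b → G.Adj (f a) (f b)) (i : Fin m) :
    r ≤ (Finset.univ.filter (fun u => G.Adj (f (Sum.inl i)) u)).card := by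
  have hadj : ∀ j : Fin r, G.Adj (f (Sum.inl i)) (f (Sum.inr (i, j))) := by
    intro j
    apply hf
    rw [caterpillar, SimpleGraph.fromRel_adj]
    exact ⟨by simp, Or.inl rfl⟩
  have := Finset.card_le_card_of_injOn (s := (Finset.univ : Finset (Fin r)))
    (t := Finset.univ.filter (fun u => G.Adj (f (Sum.inl i)) u))
    (fun j : Fin r => f (Sum.inr (i, j)))
    (fun j _ => Finset.mem_filter.mpr ⟨Finset.mem_univ _, hadj j⟩)
    (fun j1 _ j2 _ h => by simpa using f.injective h)
  simpa using this

open Finset in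
set_option maxHeartbeats 1000000 in
theorem three_caterpillars_lower_bound (k ℓ : ℕ) (hk : 1 < k) (hkl : k + 2 < ℓ) :
    ∃ N : ℕ, ∀ n, N ≤ n → k ∣ n → ℓ ∣ n →
      ∀ (V : Type) [Fintype V] (G : SimpleGraph V), IsPlanar G →
        Contains G (caterpillar 1 (n - 1)) →
        Contains G (caterpillar k (n / k - 1)) →
        Contains G (caterpillar ℓ (n / ℓ - 1)) →
        (3 / 2 - 1 / (k : ℝ) - (k : ℝ) / (ℓ : ℝ)) * (n : ℝ)
            - ((k : ℝ) - 1) * ((ℓ : ℝ) - (k : ℝ)) - (ℓ : ℝ) / 2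
          ≤ (Fintype.card V : ℝ) := by
  classical
  refine ⟨ℓ * (2 * Nat.choose (1 + k + ℓ) 3 * (1 + k + ℓ)) + ℓ * k, ?_⟩
  intro n hn hkn hln V _ G hplanar h1 h2 h3
  obtain ⟨f0, hf0⟩ := h1
  obtain ⟨f1, hf1⟩ := h2
  obtain ⟨f2, hf2⟩ := h3
  set D : ℕ := 2 * Nat.choose (1 + k + ℓ) 3 * (1 + k + ℓ) with hDdef
  have hk0 : 0 < k := by omega
  have hl0 : 0 < ℓ := by omega
  have hkl' : k + 1 ≤ ℓ := by omega
  have hkn' : k ≤ n :=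
    le_trans (le_trans (Nat.le_mul_of_pos_left k hl0) (Nat.le_add_left _ _)) hn
  have hln' : ℓ ≤ n :=
    le_trans (le_trans (Nat.le_mul_of_pos_right ℓ hk0) (Nat.le_add_left _ _)) hn
  have hDk : D * k ≤ n := by
    calc D * k ≤ D * ℓ := Nat.mul_le_mul_left D (by omega)
      _ = ℓ * D := Nat.mul_comm _ _
      _ ≤ ℓ * D + ℓ * k := Nat.le_add_right _ _
      _ ≤ n := hn
  have h1n : 1 ≤ n := le_trans hk0 hkn'
  have hA1 : 1 ≤ n / k := (Nat.one_le_div_iff hk0).mpr hkn'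
  have hB1 : 1 ≤ n / ℓ := (Nat.one_le_div_iff hl0).mpr hln'
  have hAD : D ≤ n / k := (Nat.le_div_iff_mul_le hk0).mpr hDk
  -- the hubs
  set c0 : V := f0 (Sum.inl 0) with hc0def
  set B : Finset V := Finset.image (fun i : Fin k => f1 (Sum.inl i)) Finset.univ with hBdef
  set C : Finset V := Finset.image (fun i : Fin ℓ => f2 (Sum.inl i)) Finset.univ with hCdef
  set H : Finset V := insert c0 (B ∪ C) with hHdef
  have hBcard : B.card = k := by
    have hinj : Function.Injective (fun i : Fin k => f1 (Sum.inl i)) :=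
      fun a b h => Sum.inl_injective (f1.injective h)
    rw [hBdef, Finset.card_image_of_injective _ hinj]
    simp
  have hCcard : C.card = ℓ := by
    have hinj : Function.Injective (fun i : Fin ℓ => f2 (Sum.inl i)) :=
      fun a b h => Sum.inl_injective (f2.injective h)
    rw [hCdef, Finset.card_image_of_injective _ hinj]
    simp
  have hHcard : H.card ≤ 1 + k + ℓ := by
    have h5 := Finset.card_insert_le c0 (B ∪ C)
    have h6 := Finset.card_union_le B C
    rw [hHdef]
    omega
  have hdegc0 : n - 1 ≤ (Finset.univ.filter (fun u => G.Adj c0 u)).card := spine_deg f0 hf0 0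
  have hdegB : ∀ b ∈ B, n / k - 1 ≤ (Finset.univ.filter (fun u => G.Adj b u)).card := by
    intro b hb
    rw [hBdef] at hb
    obtain ⟨i, -, rfl⟩ := Finset.mem_image.mp hb
    exact spine_deg f1 hf1 i
  have hdegC : ∀ c ∈ C, n / ℓ - 1 ≤ (Finset.univ.filter (fun u => G.Adj c u)).card := by
    intro c hc
    rw [hCdef] at hc
    obtain ⟨i, -, rfl⟩ := Finset.mem_image.mp hc
    exact spine_deg f2 hf2 i
  -- double counting
  have hdc : (∑ u : V, (H.filter (fun h => G.Adj h u)).card)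
      = ∑ h ∈ H, (Finset.univ.filter (fun u => G.Adj h u)).card := by
    simp only [Finset.card_filter]
    exact Finset.sum_comm
  -- lower bound for the hub degree sum
  have hlow : (n - 1) + ((k - 1) * (n / k - 1) + (ℓ - (k+1)) * (n / ℓ - 1))
      ≤ ∑ h ∈ H, (Finset.univ.filter (fun u => G.Adj h u)).card := by
    have hsub : insert c0 (B.erase c0 ∪ (C \ insert c0 B)) ⊆ H := by
      intro a ha
      rcases Finset.mem_insert.mp ha with rfl | ha
      · exact Finset.mem_insert_self _ _
      · rcases Finset.mem_union.mp ha with ha | ha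
        · exact Finset.mem_insert_of_mem (Finset.mem_union_left _ (Finset.mem_of_mem_erase ha))
        · exact Finset.mem_insert_of_mem (Finset.mem_union_right _ (Finset.mem_sdiff.mp ha).1)
    have hnotmem : c0 ∉ B.erase c0 ∪ (C \ insert c0 B) := by
      intro hmem
      rcases Finset.mem_union.mp hmem with h | h
      · exact Finset.notMem_erase _ _ h
      · exact (Finset.mem_sdiff.mp h).2 (Finset.mem_insert_self _ _)
    have hdisj : Disjoint (B.erase c0) (C \ insert c0 B) :=
      Finset.disjoint_left.mpr fun a ha hb =>
        (Finset.mem_sdiff.mp hb).2 (Finset.mem_insert_of_mem (Finset.mem_of_mem_erase ha))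
    have e1 : (k - 1) * (n / k - 1)
        ≤ ∑ b ∈ B.erase c0, (Finset.univ.filter (fun u => G.Adj b u)).card := by
      have hs1 : (B.erase c0).card • (n / k - 1)
          ≤ ∑ b ∈ B.erase c0, (Finset.univ.filter (fun u => G.Adj b u)).card :=
        Finset.card_nsmul_le_sum _ _ _ (fun b hb => hdegB b (Finset.mem_of_mem_erase hb))
      have hs2 : k - 1 ≤ (B.erase c0).card := by
        have := Finset.pred_card_le_card_erase (s := B) (a := c0)
        omega
      calc (k-1) * (n/k - 1) ≤ (B.erase c0).card * (n/k - 1) := Nat.mul_le_mul_right _ hs2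
        _ = (B.erase c0).card • (n/k - 1) := by rw [smul_eq_mul]
        _ ≤ _ := hs1
    have e2 : (ℓ - (k+1)) * (n / ℓ - 1)
        ≤ ∑ c ∈ C \ insert c0 B, (Finset.univ.filter (fun u => G.Adj c u)).card := by
      have hs1 : (C \ insert c0 B).card • (n / ℓ - 1)
          ≤ ∑ c ∈ C \ insert c0 B, (Finset.univ.filter (fun u => G.Adj c u)).card :=
        Finset.card_nsmul_le_sum _ _ _ (fun c hc => hdegC c (Finset.mem_sdiff.mp hc).1)
      have hs2 : ℓ - (k+1) ≤ (C \ insert c0 B).card := by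
        have h3 := Finset.le_card_sdiff (insert c0 B) C
        have h4 := Finset.card_insert_le c0 B
        omega
      calc (ℓ - (k+1)) * (n/ℓ - 1) ≤ (C \ insert c0 B).card * (n/ℓ - 1) :=
            Nat.mul_le_mul_right _ hs2
        _ = (C \ insert c0 B).card • (n/ℓ - 1) := by rw [smul_eq_mul]
        _ ≤ _ := hs1
    calc (n - 1) + ((k - 1) * (n / k - 1) + (ℓ - (k+1)) * (n / ℓ - 1))
        ≤ (Finset.univ.filter (fun u => G.Adj c0 u)).card
          + ((∑ b ∈ B.erase c0, (Finset.univ.filter (fun u => G.Adj b u)).card)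
            + ∑ c ∈ C \ insert c0 B, (Finset.univ.filter (fun u => G.Adj c u)).card) :=
          Nat.add_le_add hdegc0 (Nat.add_le_add e1 e2)
      _ = ∑ a ∈ insert c0 (B.erase c0 ∪ (C \ insert c0 B)),
            (Finset.univ.filter (fun u => G.Adj a u)).card := by
          rw [Finset.sum_insert hnotmem, Finset.sum_union hdisj]
      _ ≤ _ := Finset.sum_le_sum_of_subset hsub
  -- upper bound: few vertices see three hubs
  set T := Finset.univ.filter (fun u : V => 3 ≤ (H.filter (fun h => G.Adj h u)).card) with hTdef
  have hTcard : T.card ≤ 2 * Nat.choose (1 + k + ℓ) 3 := by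
    have hTsub : T ⊆ (H.powersetCard 3).biUnion
        (fun s => Finset.univ.filter (fun u => ∀ h ∈ s, G.Adj h u)) := by
      intro u hu
      have h3 : 3 ≤ (H.filter (fun h => G.Adj h u)).card := (Finset.mem_filter.mp hu).2
      obtain ⟨s, hs, hsc⟩ := Finset.exists_subset_card_eq h3
      exact Finset.mem_biUnion.mpr ⟨s,
        Finset.mem_powersetCard.mpr ⟨hs.trans (Finset.filter_subset _ _), hsc⟩,
        Finset.mem_filter.mpr ⟨Finset.mem_univ _,
          fun h hh => (Finset.mem_filter.mp (hs hh)).2⟩⟩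
    have hper : ∀ s ∈ H.powersetCard 3,
        (Finset.univ.filter (fun u => ∀ h ∈ s, G.Adj h u)).card ≤ 2 := by
      intro s hs
      obtain ⟨-, hs3⟩ := Finset.mem_powersetCard.mp hs
      obtain ⟨a, b, c, hab, hac, hbc, rfl⟩ := Finset.card_eq_three.mp hs3
      refine le_trans (Finset.card_le_card ?_) (no3common G hplanar.2 hab hac hbc)
      intro u hu
      have hu' := (Finset.mem_filter.mp hu).2
      exact Finset.mem_filter.mpr ⟨Finset.mem_univ _,
        hu' a (by simp), hu' b (by simp), hu' c (by simp)⟩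
    calc T.card ≤ _ := Finset.card_le_card hTsub
      _ ≤ ∑ s ∈ H.powersetCard 3,
            (Finset.univ.filter (fun u => ∀ h ∈ s, G.Adj h u)).card := Finset.card_biUnion_le
      _ ≤ (H.powersetCard 3).card • 2 := Finset.sum_le_card_nsmul _ _ _ hper
      _ = H.card.choose 3 * 2 := by rw [Finset.card_powersetCard, smul_eq_mul]
      _ ≤ 2 * Nat.choose (1+k+ℓ) 3 := by
          rw [Nat.mul_comm]
          exact Nat.mul_le_mul_left 2 (Nat.choose_le_choose 3 hHcard)
  have hup : (∑ u : V, (H.filter (fun h => G.Adj h u)).card)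
      ≤ D + 2 * Fintype.card V := by
    have hsplit := Finset.sum_filter_add_sum_filter_not Finset.univ
      (fun u : V => 3 ≤ (H.filter (fun h => G.Adj h u)).card)
      (fun u => (H.filter (fun h => G.Adj h u)).card)
    have hb1 : ∑ u ∈ T, (H.filter (fun h => G.Adj h u)).card ≤ D := by
      calc ∑ u ∈ T, (H.filter (fun h => G.Adj h u)).card
          ≤ T.card • (1 + k + ℓ) := Finset.sum_le_card_nsmul _ _ _
            (fun u _ => le_trans (Finset.card_le_card (Finset.filter_subset _ _)) hHcard)
        _ = T.card * (1+k+ℓ) := by rw [smul_eq_mul]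
        _ ≤ (2 * Nat.choose (1+k+ℓ) 3) * (1+k+ℓ) := Nat.mul_le_mul_right _ hTcard
        _ = D := rfl
    have hb2 : ∑ u ∈ Finset.univ.filter
          (fun u : V => ¬ 3 ≤ (H.filter (fun h => G.Adj h u)).card),
        (H.filter (fun h => G.Adj h u)).card ≤ 2 * Fintype.card V := by
      calc ∑ u ∈ Finset.univ.filter
            (fun u : V => ¬ 3 ≤ (H.filter (fun h => G.Adj h u)).card),
          (H.filter (fun h => G.Adj h u)).card
          ≤ (Finset.univ.filter
            (fun u : V => ¬ 3 ≤ (H.filter (fun h => G.Adj h u)).card)).card • 2 :=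
            Finset.sum_le_card_nsmul _ _ _ (fun u hu => by
              have := (Finset.mem_filter.mp hu).2
              omega)
        _ ≤ Fintype.card V * 2 := by
            rw [smul_eq_mul]
            exact Nat.mul_le_mul_right _
              (le_trans (Finset.card_filter_le _ _) (le_of_eq Finset.card_univ))
        _ = 2 * Fintype.card V := Nat.mul_comm _ _
    calc (∑ u : V, (H.filter (fun h => G.Adj h u)).card)
        = (∑ u ∈ T, (H.filter (fun h => G.Adj h u)).card)
          + ∑ u ∈ Finset.univ.filter
              (fun u : V => ¬ 3 ≤ (H.filter (fun h => G.Adj h u)).card),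
            (H.filter (fun h => G.Adj h u)).card := by rw [hTdef, hsplit]
      _ ≤ D + 2 * Fintype.card V := Nat.add_le_add hb1 hb2
  -- master inequality (natural numbers)
  have master : (n - 1) + ((k - 1) * (n / k - 1) + (ℓ - (k+1)) * (n / ℓ - 1))
      ≤ D + 2 * Fintype.card V := le_trans hlow (by rw [← hdc]; exact hup)
  -- pass to the reals
  have hnA : n = k * (n / k) := (Nat.mul_div_cancel' hkn).symm
  have hnB : n = ℓ * (n / ℓ) := (Nat.mul_div_cancel' hln).symm
  have mR := (Nat.cast_le (α := ℝ)).mpr master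
  push_cast [Nat.cast_sub h1n, Nat.cast_sub hA1, Nat.cast_sub hB1,
    Nat.cast_sub hk.le, Nat.cast_sub hkl'] at mR
  have hK0 : (k:ℝ) ≠ 0 := Nat.cast_ne_zero.mpr (by omega)
  have hL0 : (ℓ:ℝ) ≠ 0 := Nat.cast_ne_zero.mpr (by omega)
  have hxA : (n:ℝ) = (k:ℝ) * ((n / k : ℕ) : ℝ) := by exact_mod_cast hnA
  have hxB : (n:ℝ) = (ℓ:ℝ) * ((n / ℓ : ℕ) : ℝ) := by exact_mod_cast hnB
  have key1 : 1 / (k:ℝ) * (n:ℝ) = ((n / k : ℕ) : ℝ) := by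
    rw [hxA]; field_simp
  have key2 : (k:ℝ) / (ℓ:ℝ) * (n:ℝ) = (k:ℝ) * ((n / ℓ : ℕ) : ℝ) := by
    rw [hxB]; field_simp
  have hADr : (D:ℝ) ≤ ((n / k : ℕ) : ℝ) := by exact_mod_cast hAD
  have hBq0 : (0:ℝ) ≤ ((n / ℓ : ℕ) : ℝ) := Nat.cast_nonneg _
  have hk2 : (2:ℝ) ≤ (k:ℝ) := by exact_mod_cast hk
  have hklr : (k:ℝ) + 3 ≤ (ℓ:ℝ) := by exact_mod_cast (by omega : k + 3 ≤ ℓ)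
  nlinarith [mR, key1, key2, hADr, hxA, hxB,
    mul_nonneg (by linarith : (0:ℝ) ≤ (k:ℝ) - 1) hBq0,
    mul_nonneg (by linarith : (0:ℝ) ≤ (k:ℝ) - 1) (by linarith : (0:ℝ) ≤ (ℓ:ℝ) - (k:ℝ))]
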